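/- Let E and F be VH-spaces over the same admissible space Z and S₀(Z) ⊆ S_*(Z) a generating family of continuous increasing *-seminorms. On the space L*_b(E,F,S₀(Z)) of S₀(Z)-bounded adjointable operators T : E → F, the pairing [T₁, T₂] := T₁* ∘ T₂, valued in the *-algebra L*_b(E,S₀(Z)) of S₀(Z)-bounded adjointable operators on E, is a gramian compatible with the right module action (T, A) ↦ T ∘ A: it is linear in the second variable, [T₁,T₂]* = [T₂,T₁], [T,T] is a positive operator on E (i.e., [(T*∘T)x, x]_E ∈ Z⁺ for all x ∈ E), [T,T] = 0 implies T = 0, and [T₁, T₂ ∘ A] = [T₁,T₂] ∘ A for every A ∈ L*_b(E,S₀(Z)); here T₁* ∘ T₂ and T ∘ A are again S₀(Z)-bounded and adjointable. -/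

import Mathlib

open scoped ComplexConjugate Topology

/-- The data of an ordered `*`-space structure on a complex vector space `Z`:
a conjugate-linear involution and a strict convex cone of selfadjoint elements. -/
structure OrderedStarData (Z : Type*) [AddCommGroup Z] [Module ℂ Z] where
  star : Z → Z
  star_add : ∀ x y : Z, star (x + y) = star x + star y
  star_smul : ∀ (c : ℂ) (x : Z), star (c • x) = (starRingEnd ℂ) c • star x
  star_star : ∀ x : Z, star (star x) = x
  cone : Set Z
  cone_zero : (0 : Z) ∈ cone
  cone_add : ∀ x ∈ cone, ∀ y ∈ cone, x + y ∈ cone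
  cone_smul : ∀ r : ℝ, 0 ≤ r → ∀ x ∈ cone, (r : ℂ) • x ∈ cone
  cone_strict : ∀ x ∈ cone, -x ∈ cone → x = 0
  cone_star : ∀ x ∈ cone, star x = x

namespace OrderedStarData

variable {Z : Type*} [AddCommGroup Z] [Module ℂ Z]

/-- A seminorm is increasing when `0 ≤ x ≤ y` implies `p x ≤ p y`. -/
def Increasing (D : OrderedStarData Z) (p : Seminorm ℂ Z) : Prop :=
  ∀ x y : Z, x ∈ D.cone → y - x ∈ D.cone → p x ≤ p y

/-- A `*`-seminorm: `p (z*) = p z`. -/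
def StarSeminorm (D : OrderedStarData Z) (p : Seminorm ℂ Z) : Prop :=
  ∀ z : Z, p (D.star z) = p z

end OrderedStarData

/-- A topologically ordered `*`-space: an ordered `*`-space with a Hausdorff locally convex
topology generated by a family of increasing seminorms, continuous involution and closed cone. -/
structure TopOrderedStarSpace (Z : Type*) [AddCommGroup Z] [Module ℂ Z]
    [TopologicalSpace Z] extends OrderedStarData Z where
  t2 : T2Space Z
  star_continuous : Continuous star
  cone_closed : IsClosed cone
  seminorms_generate : ∃ (ι : Type) (hι : Nonempty ι) (q : ι → Seminorm ℂ Z),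
      (∀ i, ∀ x y : Z, x ∈ cone → y - x ∈ cone → q i x ≤ q i y) ∧
      (letI := hι; WithSeminorms q)

namespace TopOrderedStarSpace

variable {Z : Type*} [AddCommGroup Z] [Module ℂ Z] [TopologicalSpace Z]

/-- Membership in `S_*(Z)`, the set of continuous increasing `*`-seminorms. -/
def MemSStar (D : TopOrderedStarSpace Z) (p : Seminorm ℂ Z) : Prop :=
  Continuous ⇑p ∧ D.toOrderedStarData.Increasing p ∧ D.toOrderedStarData.StarSeminorm p

end TopOrderedStarSpace

/-- The topology of `Z` is generated by the family of seminorms `S`. -/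
def GeneratesTopology {Z : Type*} [AddCommGroup Z] [Module ℂ Z] [TopologicalSpace Z]
    (S : Set (Seminorm ℂ Z)) : Prop :=
  ∃ h : Nonempty ↥S, letI := h; WithSeminorms (fun p : ↥S => (p : Seminorm ℂ Z))

/-- A `Z`-valued gramian (vector valued inner product) on `E`, making `E` a VE-space over `Z`. -/
structure Gramian {Z : Type*} [AddCommGroup Z] [Module ℂ Z] (D : OrderedStarData Z)
    (E : Type*) [AddCommGroup E] [Module ℂ E] where
  inner : E → E → Z
  inner_self_mem : ∀ x : E, inner x x ∈ D.cone
  inner_self_eq_zero : ∀ x : E, inner x x = 0 → x = 0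
  inner_herm : ∀ x y : E, inner x y = D.star (inner y x)
  inner_add_right : ∀ x y₁ y₂ : E, inner x (y₁ + y₂) = inner x y₁ + inner x y₂
  inner_smul_right : ∀ (a : ℂ) (x y : E), inner x (a • y) = a • inner x y

namespace Gramian

variable {Z : Type*} [AddCommGroup Z] [Module ℂ Z] {D : OrderedStarData Z}
  {E : Type*} [AddCommGroup E] [Module ℂ E]
  {F : Type*} [AddCommGroup F] [Module ℂ F]

/-- The seminorm `p̃ x = p ([x,x])^{1/2}` induced on a VE-space by a seminorm on `Z`. -/
noncomputable def tilde (B : Gramian D E) (p : Seminorm ℂ Z) (x : E) : ℝ :=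
  Real.sqrt (p (B.inner x x))

/-- `S` is an adjoint of `T` : `[Tx, y] = [x, Sy]`. -/
def IsAdjoint (BE : Gramian D E) (BF : Gramian D F) (T : E →ₗ[ℂ] F) (S : F →ₗ[ℂ] E) : Prop :=
  ∀ (x : E) (y : F), BF.inner (T x) y = BE.inner x (S y)

/-- `T` is adjointable. -/
def Adjointable (BE : Gramian D E) (BF : Gramian D F) (T : E →ₗ[ℂ] F) : Prop :=
  ∃ S : F →ₗ[ℂ] E, BE.IsAdjoint BF T S

/-- `T` is bounded for the seminorm `p` : `p̃ (Tx) ≤ C p̃ x`. -/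
def BoundedFor (BE : Gramian D E) (BF : Gramian D F) (T : E →ₗ[ℂ] F) (p : Seminorm ℂ Z) : Prop :=
  ∃ C : ℝ, 0 ≤ C ∧ ∀ x : E, BF.tilde p (T x) ≤ C * BE.tilde p x

/-- The operator seminorm `p̄ T`, the infimum of the admissible bounds. -/
noncomputable def opSeminorm (BE : Gramian D E) (BF : Gramian D F) (T : E →ₗ[ℂ] F)
    (p : Seminorm ℂ Z) : ℝ :=
  sInf {C : ℝ | 0 ≤ C ∧ ∀ x : E, BF.tilde p (T x) ≤ C * BE.tilde p x}

/-- The topology of `E` is the one of a topological VE-space: it is generated by the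
seminorms `p̃` for `p ∈ S`. -/
def IsVETopology [TopologicalSpace E] (B : Gramian D E) (S : Set (Seminorm ℂ Z)) : Prop :=
  ∃ h : Nonempty ↥S, letI := h;
    ∃ q : ↥S → Seminorm ℂ E, (∀ (p : ↥S) (x : E), q p x = B.tilde p.1 x) ∧ WithSeminorms q

end Gramian

/-- A barrel: a closed, absorbent, balanced, convex set. -/
def IsBarrel {E : Type*} [AddCommGroup E] [Module ℂ E] [TopologicalSpace E] (s : Set E) : Prop :=
  IsClosed s ∧ Absorbent ℂ s ∧ Balanced ℂ s ∧ Convex ℝ s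

/-- A (complex) topological vector space is barrelled if every barrel is a neighbourhood of `0`. -/
def BarrelledSp (E : Type*) [AddCommGroup E] [Module ℂ E] [TopologicalSpace E] : Prop :=
  ∀ s : Set E, IsBarrel s → s ∈ 𝓝 (0 : E)

/-- A barrel with respect to the topology of a norm function `N`. -/
def IsBarrelWrtNorm {V : Type*} [AddCommGroup V] [Module ℂ V] (N : V → ℝ) (s : Set V) : Prop :=
  (∀ x : V, (∀ ε : ℝ, 0 < ε → ∃ y ∈ s, N (x - y) < ε) → x ∈ s) ∧
  Absorbent ℂ s ∧ Balanced ℂ s ∧ Convex ℝ s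

/-- Barrelledness with respect to the topology of a norm function `N`. -/
def BarrelledWrtNorm {V : Type*} [AddCommGroup V] [Module ℂ V] (N : V → ℝ) : Prop :=
  ∀ s : Set V, IsBarrelWrtNorm N s → ∃ ε : ℝ, 0 < ε ∧ ∀ x : V, N x < ε → x ∈ s

/-- The kernel of a seminorm, as a submodule. -/
def semKer {Z : Type*} [AddCommGroup Z] [Module ℂ Z] (p : Seminorm ℂ Z) : Submodule ℂ Z where
  carrier := {z | p z = 0}
  add_mem' := by
    intro a b ha hb
    simp only [Set.mem_setOf_eq] at ha hb ⊢
    exact le_antisymm ((map_add_le_add p a b).trans (by simp [ha, hb])) (apply_nonneg p _)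
  zero_mem' := map_zero p
  smul_mem' := by
    intro c x hx
    simp only [Set.mem_setOf_eq] at hx ⊢
    rw [map_smul_eq_mul, hx, mul_zero]

section AuxCS

variable {Z : Type*} [AddCommGroup Z] [Module ℂ Z] {D : OrderedStarData Z}
  {E : Type*} [AddCommGroup E] [Module ℂ E]
  {F : Type*} [AddCommGroup F] [Module ℂ F]

lemma Gramian.star_inner (B : Gramian D E) (x y : E) :
    D.star (B.inner x y) = B.inner y x := by
  rw [B.inner_herm x y, D.star_star]

lemma Gramian.inner_smul_left (B : Gramian D E) (a : ℂ) (x y : E) :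
    B.inner (a • x) y = (starRingEnd ℂ) a • B.inner x y := by
  rw [B.inner_herm, B.inner_smul_right, D.star_smul, B.star_inner]

lemma Gramian.inner_add_left (B : Gramian D E) (x₁ x₂ y : E) :
    B.inner (x₁ + x₂) y = B.inner x₁ y + B.inner x₂ y := by
  rw [B.inner_herm, B.inner_add_right, D.star_add, B.star_inner, B.star_inner]

lemma Gramian.inner_zero_right (B : Gramian D E) (x : E) :
    B.inner x (0 : E) = 0 := by
  have := B.inner_smul_right 0 x 0
  simpa using this

/-- The one-parameter Cauchy–Schwarz-type estimate. -/
lemma Gramian.keyCS (B : Gramian D E) {p : Seminorm ℂ Z}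
    (hinc : D.Increasing p) (u v : E) {t : ℝ} (ht : 0 < t) :
    p (B.inner u v) ≤ 3 * (t * p (B.inner u u) + t⁻¹ * p (B.inner v v)) := by
  set X := B.inner u u with hX
  set Y := B.inner v v with hY
  set s := B.inner u v with hs
  set s' := B.inner v u with hs'
  -- step: for any unimodular λ, the selfadjoint part λ•s + conj λ•s' is controlled
  have step : ∀ lam : ℂ, (starRingEnd ℂ) lam * lam = 1 →
      p (lam • s + (starRingEnd ℂ) lam • s') ≤ 3 * (t * p X + t⁻¹ * p Y) := by
    intro lam hlam
    set w := lam • s + (starRingEnd ℂ) lam • s' with hw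
    have hexp : ∀ r : ℝ, B.inner ((r : ℂ) • u + lam • v) ((r : ℂ) • u + lam • v)
        = ((r : ℂ) ^ 2) • X + Y + (r : ℂ) • w := by
      intro r
      simp only [hw, hX, hY, hs, hs', B.inner_add_right, B.inner_add_left,
        B.inner_smul_right, B.inner_smul_left, Complex.conj_ofReal, smul_add, smul_smul]
      rw [show lam * (starRingEnd ℂ) lam = 1 by rw [mul_comm]; exact hlam, one_smul]
      module
    have hmem : ∀ r : ℝ, ((r : ℂ) ^ 2) • X + Y + (r : ℂ) • w ∈ D.cone := by
      intro r
      rw [← hexp r]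
      exact B.inner_self_mem _
    have h1 : ((t : ℂ) ^ 2) • X + Y + (t : ℂ) • w ∈ D.cone := hmem t
    have h2 : ((t : ℂ) ^ 2) • X + Y + (-(t : ℂ)) • w ∈ D.cone := by
      have := hmem (-t)
      rw [show (((-t : ℝ) : ℂ)) ^ 2 = ((t : ℂ)) ^ 2 by push_cast; ring,
        show (((-t : ℝ)) : ℂ) = -(t : ℂ) by push_cast; ring] at this
      exact this
    have hsum : ((((t : ℂ) ^ 2) • X + Y + (t : ℂ) • w) + (((t : ℂ) ^ 2) • X + Y + (-(t : ℂ)) • w))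
        = (2 : ℂ) • (((t : ℂ) ^ 2) • X + Y) := by module
    have hle1 : p (((t : ℂ) ^ 2) • X + Y + (t : ℂ) • w)
        ≤ p ((2 : ℂ) • (((t : ℂ) ^ 2) • X + Y)) := by
      rw [← hsum]
      refine hinc _ _ h1 ?_
      rw [add_sub_cancel_left]
      exact h2
    have hXY : p (((t : ℂ) ^ 2) • X + Y) ≤ t ^ 2 * p X + p Y := by
      refine (map_add_le_add p _ _).trans ?_
      rw [map_smul_eq_mul]
      have : ‖((t : ℂ) ^ 2)‖ = t ^ 2 := by
        rw [norm_pow, Complex.norm_real]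
        rw [Real.norm_eq_abs, sq_abs]
      rw [this]
    have hval : p ((2 : ℂ) • (((t : ℂ) ^ 2) • X + Y)) ≤ 2 * (t ^ 2 * p X + p Y) := by
      rw [map_smul_eq_mul]
      have : ‖(2 : ℂ)‖ = 2 := by norm_num
      rw [this]
      nlinarith [hXY]
    have htw : t * p w ≤ 3 * (t ^ 2 * p X + p Y) := by
      have heq : (t : ℂ) • w = (((t : ℂ) ^ 2) • X + Y + (t : ℂ) • w) - (((t : ℂ) ^ 2) • X + Y) := by
        module
      have h3 := map_sub_le_add p (((t : ℂ) ^ 2) • X + Y + (t : ℂ) • w) (((t : ℂ) ^ 2) • X + Y)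
      rw [← heq] at h3
      have h4 : p ((t : ℂ) • w) = t * p w := by
        rw [map_smul_eq_mul, Complex.norm_real, Real.norm_eq_abs, abs_of_pos ht]
      nlinarith [h3, h4, hle1, hval, hXY]
    have hpw : p w ≤ 3 * (t * p X + t⁻¹ * p Y) := by
      rw [show 3 * (t * p X + t⁻¹ * p Y) = (3 * (t ^ 2 * p X + p Y)) / t by
        field_simp]
      rw [le_div_iff₀ ht]
      nlinarith [htw]
    exact hpw
  have hw1 := step 1 (by simp)
  have hw2 := step Complex.I (by rw [Complex.conj_I, neg_mul, Complex.I_mul_I, neg_neg])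
  -- s = 2⁻¹ • w₁ + (-(2⁻¹ * I)) • w₂
  have hdecomp : s = (2⁻¹ : ℂ) • ((1 : ℂ) • s + (starRingEnd ℂ) (1 : ℂ) • s')
      + (-(2⁻¹ * Complex.I)) • (Complex.I • s + (starRingEnd ℂ) Complex.I • s') := by
    simp only [map_one, one_smul, Complex.conj_I, smul_add, smul_smul]
    rw [show (-(2⁻¹ * Complex.I)) * Complex.I = (2⁻¹ : ℂ) by
      linear_combination (-(2⁻¹ : ℂ)) * Complex.I_mul_I]
    rw [show (-(2⁻¹ * Complex.I)) * (-Complex.I) = (-2⁻¹ : ℂ) by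
      linear_combination (2⁻¹ : ℂ) * Complex.I_mul_I]
    module
  have hnorm1 : ‖(2⁻¹ : ℂ)‖ = 2⁻¹ := by norm_num
  have hnorm2 : ‖(-(2⁻¹ * Complex.I) : ℂ)‖ = 2⁻¹ := by
    simp [norm_mul]
  calc p s = p ((2⁻¹ : ℂ) • ((1 : ℂ) • s + (starRingEnd ℂ) (1 : ℂ) • s')
      + (-(2⁻¹ * Complex.I)) • (Complex.I • s + (starRingEnd ℂ) Complex.I • s')) := by
        rw [← hdecomp]
    _ ≤ p ((2⁻¹ : ℂ) • ((1 : ℂ) • s + (starRingEnd ℂ) (1 : ℂ) • s'))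
      + p ((-(2⁻¹ * Complex.I)) • (Complex.I • s + (starRingEnd ℂ) Complex.I • s')) :=
        map_add_le_add p _ _
    _ = 2⁻¹ * p ((1 : ℂ) • s + (starRingEnd ℂ) (1 : ℂ) • s')
      + 2⁻¹ * p (Complex.I • s + (starRingEnd ℂ) Complex.I • s') := by
        rw [map_smul_eq_mul, map_smul_eq_mul, hnorm1, hnorm2]
    _ ≤ 3 * (t * p X + t⁻¹ * p Y) := by nlinarith [hw1, hw2]

/-- Cauchy–Schwarz with constant 6. -/
lemma Gramian.csIneq (B : Gramian D E) {p : Seminorm ℂ Z}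
    (hinc : D.Increasing p) (u v : E) :
    p (B.inner u v) ≤ 6 * Real.sqrt (p (B.inner u u)) * Real.sqrt (p (B.inner v v)) := by
  set a := p (B.inner u u) with ha
  set b := p (B.inner v v) with hb
  have ha0 : 0 ≤ a := apply_nonneg p _
  have hb0 : 0 ≤ b := apply_nonneg p _
  by_cases hps : p (B.inner u v) ≤ 0
  · exact hps.trans (by positivity)
  push_neg at hps
  rcases eq_or_lt_of_le ha0 with haz | hap
  · rcases eq_or_lt_of_le hb0 with hbz | hbp
    · exfalso
      have := B.keyCS hinc u v (t := 1) one_pos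
      rw [← ha, ← hb, ← haz, ← hbz] at this
      simp at this
      linarith
    · exfalso
      have htpos : 0 < 6 * b / p (B.inner u v) := by positivity
      have := B.keyCS hinc u v htpos
      rw [← ha, ← hb, ← haz] at this
      have hcalc : (6 * b / p (B.inner u v))⁻¹ * b = p (B.inner u v) / 6 := by
        field_simp
      rw [mul_zero, hcalc] at this
      linarith
  · rcases eq_or_lt_of_le hb0 with hbz | hbp
    · exfalso
      have htpos : 0 < p (B.inner u v) / (6 * a) := by positivity
      have := B.keyCS hinc u v htpos
      rw [← ha, ← hb, ← hbz] at this
      have hcalc : p (B.inner u v) / (6 * a) * a = p (B.inner u v) / 6 := by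
        field_simp
      rw [hcalc, mul_zero] at this
      linarith
    · have hsa : 0 < Real.sqrt a := Real.sqrt_pos.mpr hap
      have hsb : 0 < Real.sqrt b := Real.sqrt_pos.mpr hbp
      have htpos : 0 < Real.sqrt b / Real.sqrt a := by positivity
      have := B.keyCS hinc u v htpos
      rw [← ha, ← hb] at this
      have e1 : Real.sqrt b / Real.sqrt a * a = Real.sqrt a * Real.sqrt b := by
        rw [show a = Real.sqrt a * Real.sqrt a from (Real.mul_self_sqrt ha0).symm]
        rw [Real.sqrt_mul_self hsa.le, div_mul_eq_mul_div, div_eq_iff hsa.ne']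
        ring
      have e2 : (Real.sqrt b / Real.sqrt a)⁻¹ * b = Real.sqrt a * Real.sqrt b := by
        rw [show b = Real.sqrt b * Real.sqrt b from (Real.mul_self_sqrt hb0).symm]
        rw [Real.sqrt_mul_self hsb.le, inv_div, div_mul_eq_mul_div, div_eq_iff hsb.ne']
        ring
      rw [e1, e2] at this
      calc p (B.inner u v) ≤ 3 * (Real.sqrt a * Real.sqrt b + Real.sqrt a * Real.sqrt b) := this
        _ = 6 * Real.sqrt a * Real.sqrt b := by ring

/-- The adjoint of a `p`-bounded operator is `p`-bounded, with constant `6 C`. -/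
lemma Gramian.adjoint_bound (BE : Gramian D E) (BF : Gramian D F) {p : Seminorm ℂ Z}
    (hinc : D.Increasing p) {T : E →ₗ[ℂ] F} {S : F →ₗ[ℂ] E}
    (hadj : BE.IsAdjoint BF T S) {C : ℝ} (hC : 0 ≤ C)
    (hT : ∀ x : E, BF.tilde p (T x) ≤ C * BE.tilde p x) (z : F) :
    BE.tilde p (S z) ≤ 6 * C * BF.tilde p z := by
  set a := BE.tilde p (S z) with hadef
  set b := BF.tilde p z with hbdef
  have ha0 : 0 ≤ a := Real.sqrt_nonneg _
  have hb0 : 0 ≤ b := Real.sqrt_nonneg _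
  have hsq : a ^ 2 = p (BE.inner (S z) (S z)) := by
    rw [hadef, Gramian.tilde, Real.sq_sqrt (apply_nonneg p _)]
  have hkey : a ^ 2 ≤ 6 * C * a * b := by
    rw [hsq, ← hadj (S z) z]
    calc p (BF.inner (T (S z)) z)
        ≤ 6 * Real.sqrt (p (BF.inner (T (S z)) (T (S z)))) * Real.sqrt (p (BF.inner z z)) :=
          BF.csIneq hinc _ _
      _ = 6 * BF.tilde p (T (S z)) * b := rfl
      _ ≤ 6 * (C * a) * b := by
          have := hT (S z)
          rw [← hadef] at this
          have h6 : (0:ℝ) ≤ 6 := by norm_num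
          nlinarith [this, hb0]
      _ = 6 * C * a * b := by ring
  rcases eq_or_lt_of_le ha0 with haz | hap
  · rw [← haz]; positivity
  · nlinarith [hkey, hap]

end AuxCS


/-- For VH-spaces `E`, `F` over the same admissible space, the space of
`S₀`-bounded adjointable operators `E → F` is a (locally Hilbert `C*`-) module over the
bounded adjointable operators of `E`, with the gramian `[T₁, T₂] = T₁* ∘ T₂`. -/
theorem statement6 {Z E F : Type*} [AddCommGroup Z] [Module ℂ Z] [UniformSpace Z]
    [IsUniformAddGroup Z] [CompleteSpace Z]
    [AddCommGroup E] [Module ℂ E] [UniformSpace E] [IsUniformAddGroup E] [CompleteSpace E]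
    [AddCommGroup F] [Module ℂ F] [UniformSpace F] [IsUniformAddGroup F] [CompleteSpace F]
    (D : TopOrderedStarSpace Z)
    (BE : Gramian D.toOrderedStarData E) (BF : Gramian D.toOrderedStarData F)
    (S₀ : Set (Seminorm ℂ Z)) (hS₀ : ∀ p ∈ S₀, D.MemSStar p)
    (hS₀gen : GeneratesTopology S₀)
    (hE : BE.IsVETopology S₀) (hF : BF.IsVETopology S₀) :
    -- the pairing `[T₁,T₂] = T₁* ∘ T₂` stays in the bounded adjointable operators of `E`
    (∀ (T₁ T₂ : E →ₗ[ℂ] F) (S₁ : F →ₗ[ℂ] E), BE.IsAdjoint BF T₁ S₁ →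
      BE.Adjointable BF T₂ →
      (∀ p ∈ S₀, BE.BoundedFor BF T₁ p) → (∀ p ∈ S₀, BE.BoundedFor BF T₂ p) →
      BE.Adjointable BE (S₁ ∘ₗ T₂) ∧ (∀ p ∈ S₀, BE.BoundedFor BE (S₁ ∘ₗ T₂) p)) ∧
    -- the right module action stays in the bounded adjointable operators `E → F`
    (∀ (T : E →ₗ[ℂ] F) (A : E →ₗ[ℂ] E), BE.Adjointable BF T → BE.Adjointable BE A →
      (∀ p ∈ S₀, BE.BoundedFor BF T p) → (∀ p ∈ S₀, BE.BoundedFor BE A p) →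
      BE.Adjointable BF (T ∘ₗ A) ∧ (∀ p ∈ S₀, BE.BoundedFor BF (T ∘ₗ A) p)) ∧
    -- linearity in the second variable
    (∀ (T₂ T₃ : E →ₗ[ℂ] F) (S₁ : F →ₗ[ℂ] E) (a b : ℂ),
      S₁ ∘ₗ (a • T₂ + b • T₃) = a • (S₁ ∘ₗ T₂) + b • (S₁ ∘ₗ T₃)) ∧
    -- hermitian symmetry : `[T₁,T₂]* = [T₂,T₁]`
    (∀ (T₁ T₂ : E →ₗ[ℂ] F) (S₁ S₂ : F →ₗ[ℂ] E), BE.IsAdjoint BF T₁ S₁ →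
      BE.IsAdjoint BF T₂ S₂ → BE.IsAdjoint BE (S₁ ∘ₗ T₂) (S₂ ∘ₗ T₁)) ∧
    -- positivity : `[T,T]` is a positive operator on `E`
    (∀ (T : E →ₗ[ℂ] F) (S : F →ₗ[ℂ] E), BE.IsAdjoint BF T S →
      ∀ x : E, BE.inner ((S ∘ₗ T) x) x ∈ D.cone) ∧
    -- strict positivity : `[T,T] = 0` implies `T = 0`
    (∀ (T : E →ₗ[ℂ] F) (S : F →ₗ[ℂ] E), BE.IsAdjoint BF T S →
      (∀ p ∈ S₀, BE.BoundedFor BF T p) → S ∘ₗ T = 0 → T = 0) ∧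
    -- compatibility with the module action : `[T₁, T₂ ∘ A] = [T₁,T₂] ∘ A`
    (∀ (T₂ : E →ₗ[ℂ] F) (S₁ : F →ₗ[ℂ] E) (A : E →ₗ[ℂ] E),
      S₁ ∘ₗ (T₂ ∘ₗ A) = (S₁ ∘ₗ T₂) ∘ₗ A) := by
  have compAdj : ∀ (T₁ T₂ : E →ₗ[ℂ] F) (S₁ S₂ : F →ₗ[ℂ] E), BE.IsAdjoint BF T₁ S₁ →
      BE.IsAdjoint BF T₂ S₂ → BE.IsAdjoint BE (S₁ ∘ₗ T₂) (S₂ ∘ₗ T₁) := by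
    intro T₁ T₂ S₁ S₂ h₁ h₂ x y
    simp only [LinearMap.comp_apply]
    calc BE.inner (S₁ (T₂ x)) y
        = D.toOrderedStarData.star (BE.inner y (S₁ (T₂ x))) := BE.inner_herm _ _
      _ = D.toOrderedStarData.star (BF.inner (T₁ y) (T₂ x)) := by rw [h₁]
      _ = BF.inner (T₂ x) (T₁ y) := BF.star_inner _ _
      _ = BE.inner x (S₂ (T₁ y)) := h₂ x (T₁ y)
  refine ⟨?_, ?_, ?_, ?_, ?_, ?_, ?_⟩
  · -- composition S₁ ∘ T₂ is adjointable and bounded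
    rintro T₁ T₂ S₁ h₁ ⟨S₂, h₂⟩ hb₁ hb₂
    refine ⟨⟨S₂ ∘ₗ T₁, compAdj T₁ T₂ S₁ S₂ h₁ h₂⟩, ?_⟩
    intro p hp
    obtain ⟨-, hinc, -⟩ := hS₀ p hp
    obtain ⟨C₁, hC₁, hT₁⟩ := hb₁ p hp
    obtain ⟨C₂, hC₂, hT₂⟩ := hb₂ p hp
    refine ⟨6 * C₁ * C₂, by positivity, fun x => ?_⟩
    simp only [LinearMap.comp_apply]
    calc BE.tilde p (S₁ (T₂ x)) ≤ 6 * C₁ * BF.tilde p (T₂ x) :=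
          BE.adjoint_bound BF hinc h₁ hC₁ hT₁ (T₂ x)
      _ ≤ 6 * C₁ * (C₂ * BE.tilde p x) := by
          have := hT₂ x
          nlinarith [this, hC₁]
      _ = 6 * C₁ * C₂ * BE.tilde p x := by ring
  · -- the module action : T ∘ A
    rintro T A ⟨S, hS⟩ ⟨A', hA'⟩ hbT hbA
    constructor
    · refine ⟨A' ∘ₗ S, fun x y => ?_⟩
      simp only [LinearMap.comp_apply]
      rw [hS (A x) y, hA' x (S y)]
    · intro p hp
      obtain ⟨C₁, hC₁, hT⟩ := hbT p hp
      obtain ⟨C₂, hC₂, hA⟩ := hbA p hp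
      refine ⟨C₁ * C₂, by positivity, fun x => ?_⟩
      simp only [LinearMap.comp_apply]
      calc BF.tilde p (T (A x)) ≤ C₁ * BE.tilde p (A x) := hT (A x)
        _ ≤ C₁ * (C₂ * BE.tilde p x) := by
            have := hA x
            nlinarith [this, hC₁]
        _ = C₁ * C₂ * BE.tilde p x := by ring
  · -- linearity in the second variable
    intro T₂ T₃ S₁ a b
    ext x
    simp
  · -- hermitian symmetry
    exact fun T₁ T₂ S₁ S₂ h₁ h₂ => compAdj T₁ T₂ S₁ S₂ h₁ h₂
  · -- positivity
    intro T S h x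
    simp only [LinearMap.comp_apply]
    rw [BE.inner_herm, ← h x (T x)]
    rw [D.toOrderedStarData.cone_star _ (BF.inner_self_mem _)]
    exact BF.inner_self_mem _
  · -- strict positivity
    intro T S h hb hST
    ext x
    have hx : S (T x) = 0 := by
      have := LinearMap.ext_iff.mp hST x
      simpa using this
    have h0 : BF.inner (T x) (T x) = 0 := by
      rw [h x (T x), hx, BE.inner_zero_right]
    simpa using BF.inner_self_eq_zero (T x) h0
  · -- compatibility with the module action
    intro T₂ S₁ A
    rfl
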